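/- Conflict resolution for non-crossing matchings: given a cyclic order on the vertices of a face and a maximum matching M of the bipartite alignment graph B(f), if (a,c) and (b,d) are two matching edges in conflict with a, b, c, d appearing in this clockwise order, then M' = (M \ {(a,c),(b,d)}) ∪ {(a,d),(b,c)} is also a maximum matching with strictly fewer conflicting pairs; consequently a planar (conflict-free) maximum matching of B(f) exists. -/

import Mathlib

/-- `ArcBtw a b c` means `b` lies strictly inside the clockwise arc from `a` to `c`
on a circle of `n` points labelled `0, …, n-1` in clockwise order. -/
def ArcBtw {n : ℕ} (a b c : Fin n) : Prop :=
  ((a : ℕ) < b ∧ (b : ℕ) < c) ∨ ((b : ℕ) < c ∧ (c : ℕ) < a) ∨ ((c : ℕ) < a ∧ (a : ℕ) < b)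

/-- Two alignment edges `(a, c)` and `(b, d)` are in conflict (cross) iff exactly
one of `b`, `d` lies on the open arc from `a` to `c`. -/
def SegConflict {n : ℕ} (p q : Fin n × Fin n) : Prop :=
  Xor' (ArcBtw p.1 q.1 p.2) (ArcBtw p.1 q.2 p.2)

/-- `M` is a matching: distinct pairs of `M` use pairwise distinct vertices. -/
def IsPairMatching {n : ℕ} (M : Finset (Fin n × Fin n)) : Prop :=
  (∀ p ∈ M, p.1 ≠ p.2) ∧
  ∀ p ∈ M, ∀ q ∈ M, p ≠ q → p.1 ≠ q.1 ∧ p.1 ≠ q.2 ∧ p.2 ≠ q.1 ∧ p.2 ≠ q.2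

/-- The number of conflicting (crossing) ordered pairs of edges of `M`. -/
noncomputable def conflictCount {n : ℕ} (M : Finset (Fin n × Fin n)) : ℕ :=
  {pq : (Fin n × Fin n) × (Fin n × Fin n) |
    pq.1 ∈ M ∧ pq.2 ∈ M ∧ pq.1 ≠ pq.2 ∧ SegConflict pq.1 pq.2}.ncard

instance {n : ℕ} (a b c : Fin n) : Decidable (ArcBtw a b c) := by
  unfold ArcBtw; exact inferInstance

instance {n : ℕ} (p q : Fin n × Fin n) : Decidable (SegConflict p q) := by
  unfold SegConflict Xor'; exact inferInstance

lemma count_eq {n : ℕ} (K : Finset (Fin n × Fin n)) :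
    conflictCount K = ∑ p ∈ K, ∑ q ∈ K, (if p ≠ q ∧ SegConflict p q then 1 else 0) := by
  unfold conflictCount
  rw [show {pq : (Fin n × Fin n) × (Fin n × Fin n) |
      pq.1 ∈ K ∧ pq.2 ∈ K ∧ pq.1 ≠ pq.2 ∧ SegConflict pq.1 pq.2}
      = ↑((K ×ˢ K).filter fun pq => pq.1 ≠ pq.2 ∧ SegConflict pq.1 pq.2) from by
    ext pq
    simp [Finset.mem_filter, Finset.mem_product, and_assoc]]
  rw [Set.ncard_coe_finset, Finset.card_filter, Finset.sum_product]

lemma segConflict_comm {n : ℕ} {x y u v : Fin n} (h3 : (x:ℕ) ≠ u) (h4 : (x:ℕ) ≠ v)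
    (h5 : (y:ℕ) ≠ u) (h6 : (y:ℕ) ≠ v) :
    SegConflict (x,y) (u,v) ↔ SegConflict (u,v) (x,y) := by
  unfold SegConflict ArcBtw Xor' Xor
  simp only
  omega

lemma keyC1 {n : ℕ} {x y a b c d : Fin n}
    (hab : ArcBtw a b c) (hcd : ArcBtw a c d)
    (hxa : (x:ℕ) ≠ a) (hxb : (x:ℕ) ≠ b) (hxc : (x:ℕ) ≠ c) (hxd : (x:ℕ) ≠ d)
    (hya : (y:ℕ) ≠ a) (hyb : (y:ℕ) ≠ b) (hyc : (y:ℕ) ≠ c) (hyd : (y:ℕ) ≠ d) :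
    ArcBtw x a y → ArcBtw x c y → ¬ ArcBtw x b y → ArcBtw x d y := by
  unfold ArcBtw at *
  omega

lemma keyC2 {n : ℕ} {x y a b c d : Fin n}
    (hab : ArcBtw a b c) (hcd : ArcBtw a c d)
    (hxa : (x:ℕ) ≠ a) (hxb : (x:ℕ) ≠ b) (hxc : (x:ℕ) ≠ c) (hxd : (x:ℕ) ≠ d)
    (hya : (y:ℕ) ≠ a) (hyb : (y:ℕ) ≠ b) (hyc : (y:ℕ) ≠ c) (hyd : (y:ℕ) ≠ d) :
    ArcBtw x b y → ArcBtw x d y → ¬ ArcBtw x c y → ArcBtw x a y := by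
  unfold ArcBtw at *
  omega

lemma boolkey (P1 P2 P3 P4 : Prop)
    (C1 : P1 → P3 → ¬P2 → P4) (C2 : P2 → P4 → ¬P3 → P1) :
    (Xor' P1 P4 ∧ Xor' P2 P3 → Xor' P1 P3 ∧ Xor' P2 P4)
    ∧ (Xor' P1 P4 ∨ Xor' P2 P3 → Xor' P1 P3 ∨ Xor' P2 P4) := by
  unfold Xor' Xor
  tauto

lemma key12 {n : ℕ} {x y a b c d : Fin n}
    (hab : ArcBtw a b c) (hcd : ArcBtw a c d)
    (hxa : (x:ℕ) ≠ a) (hxb : (x:ℕ) ≠ b) (hxc : (x:ℕ) ≠ c) (hxd : (x:ℕ) ≠ d)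
    (hya : (y:ℕ) ≠ a) (hyb : (y:ℕ) ≠ b) (hyc : (y:ℕ) ≠ c) (hyd : (y:ℕ) ≠ d) :
    (SegConflict (x,y) (a,d) ∧ SegConflict (x,y) (b,c) →
      SegConflict (x,y) (a,c) ∧ SegConflict (x,y) (b,d))
    ∧ (SegConflict (x,y) (a,d) ∨ SegConflict (x,y) (b,c) →
      SegConflict (x,y) (a,c) ∨ SegConflict (x,y) (b,d)) := by
  have C1 := keyC1 hab hcd hxa hxb hxc hxd hya hyb hyc hyd
  have C2 := keyC2 hab hcd hxa hxb hxc hxd hya hyb hyc hyd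
  exact boolkey (ArcBtw x a y) (ArcBtw x b y) (ArcBtw x c y) (ArcBtw x d y) C1 C2

lemma pointwise {n : ℕ} {x y a b c d : Fin n}
    (hab : ArcBtw a b c) (hcd : ArcBtw a c d)
    (hxa : (x:ℕ) ≠ a) (hxb : (x:ℕ) ≠ b) (hxc : (x:ℕ) ≠ c) (hxd : (x:ℕ) ≠ d)
    (hya : (y:ℕ) ≠ a) (hyb : (y:ℕ) ≠ b) (hyc : (y:ℕ) ≠ c) (hyd : (y:ℕ) ≠ d) :
    ((if SegConflict (x,y) (a,d) then 1 else 0) + (if SegConflict (x,y) (b,c) then 1 else 0) : ℕ)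
      ≤ (if SegConflict (x,y) (a,c) then 1 else 0) + (if SegConflict (x,y) (b,d) then 1 else 0) := by
  obtain ⟨K1, K2⟩ := key12 hab hcd hxa hxb hxc hxd hya hyb hyc hyd
  by_cases hA : SegConflict (x,y) (a,d) <;> by_cases hB : SegConflict (x,y) (b,c) <;>
    by_cases hC : SegConflict (x,y) (a,c) <;> by_cases hD : SegConflict (x,y) (b,d) <;>
    simp [hA, hB, hC, hD] <;> tauto

lemma noconf {n : ℕ} {a b c d : Fin n} (hab : ArcBtw a b c) (hcd : ArcBtw a c d) :
    ¬ SegConflict (a,d) (b,c) ∧ ¬ SegConflict (b,c) (a,d) := by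
  unfold SegConflict ArcBtw Xor' Xor at *
  simp only
  omega

lemma tri {n : ℕ} {a b c : Fin n} (h1 : (a:ℕ) ≠ b) (h2 : (b:ℕ) ≠ c) (h3 : (a:ℕ) ≠ c) :
    ArcBtw a b c ∨ ArcBtw a c b := by
  unfold ArcBtw; omega

lemma norm2 {n : ℕ} {a b c d : Fin n} (hD : ArcBtw a d c) (hB : ArcBtw a c b)
    (hbd : (b:ℕ) ≠ d) :
    ArcBtw b a d ∧ ArcBtw b d c ∧ ¬ ArcBtw b c d := by
  unfold ArcBtw at *; omega

lemma count_union_pair {n : ℕ} (N : Finset (Fin n × Fin n)) (g1 g2 : Fin n × Fin n)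
    (hg : g1 ≠ g2) (h1 : g1 ∉ N) (h2 : g2 ∉ N) :
    conflictCount (N ∪ {g1, g2}) =
      (∑ p ∈ N, ∑ q ∈ N, if p ≠ q ∧ SegConflict p q then 1 else 0)
        + ((∑ p ∈ N, ((if SegConflict p g1 then 1 else 0) + (if SegConflict p g2 then 1 else 0)))
          + (∑ q ∈ N, ((if SegConflict g1 q then 1 else 0) + (if SegConflict g2 q then 1 else 0))))
        + ((if SegConflict g1 g2 then 1 else 0) + (if SegConflict g2 g1 then 1 else 0)) := by
  have hdisj : Disjoint N ({g1, g2} : Finset _) := by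
    simp [Finset.disjoint_insert_right, Finset.disjoint_singleton_right, h1, h2]
  rw [count_eq, Finset.sum_union hdisj, Finset.sum_pair hg]
  have inner : ∀ r ∈ N, (∑ q ∈ N ∪ {g1,g2}, if r ≠ q ∧ SegConflict r q then 1 else 0)
      = (∑ q ∈ N, if r ≠ q ∧ SegConflict r q then 1 else 0)
        + ((if SegConflict r g1 then 1 else 0) + (if SegConflict r g2 then 1 else 0)) := by
    intro r hr
    rw [Finset.sum_union hdisj, Finset.sum_pair hg]
    have hr1 : r ≠ g1 := fun h => h1 (h ▸ hr)
    have hr2 : r ≠ g2 := fun h => h2 (h ▸ hr)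
    simp [hr1, hr2]
  rw [Finset.sum_congr rfl inner, Finset.sum_add_distrib]
  have outer : ∀ g : Fin n × Fin n, g ∉ N →
      (∑ q ∈ N, if g ≠ q ∧ SegConflict g q then 1 else 0)
        = (∑ q ∈ N, if SegConflict g q then 1 else 0) := by
    intro g hgN
    refine Finset.sum_congr rfl fun q hq => ?_
    have : g ≠ q := fun h => hgN (h ▸ hq)
    simp [this]
  rw [Finset.sum_union hdisj, Finset.sum_pair hg, outer g1 h1]
  rw [Finset.sum_union hdisj, Finset.sum_pair hg, outer g2 h2]
  simp only [ne_eq, not_true_eq_false, false_and, if_false, hg, not_false_eq_true, true_and,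
    hg.symm, Finset.sum_add_distrib]
  ring

lemma finne {n : ℕ} {u v : Fin n} (h : (u:ℕ) ≠ v) : u ≠ v := fun h' => h (by rw [h'])

lemma valne {n : ℕ} {u v : Fin n} (h : u ≠ v) : (u:ℕ) ≠ v := fun h' => h (Fin.val_injective h')

lemma core {n : ℕ} (M : Finset (Fin n × Fin n)) (hmatch : IsPairMatching M)
    (a b c d : Fin n) (h1 : (a,c) ∈ M) (h2 : (b,d) ∈ M)
    (hconf : SegConflict (a,c) (b,d)) (hab : ArcBtw a b c) (hcd : ArcBtw a c d) :
    IsPairMatching ((M \ {(a, c), (b, d)}) ∪ {(a, d), (b, c)}) ∧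
      ((M \ {(a, c), (b, d)}) ∪ {(a, d), (b, c)}).card = M.card ∧
      conflictCount ((M \ {(a, c), (b, d)}) ∪ {(a, d), (b, c)}) < conflictCount M := by
  have hv : (a:ℕ) ≠ b ∧ (a:ℕ) ≠ c ∧ (a:ℕ) ≠ d ∧ (b:ℕ) ≠ c ∧ (b:ℕ) ≠ d ∧ (c:ℕ) ≠ d := by
    unfold ArcBtw at hab hcd; omega
  obtain ⟨vab, vac, vad, vbc, vbd, vcd⟩ := hv
  have hne12 : ((a,c) : Fin n × Fin n) ≠ (b,d) :=
    fun h => finne vab (congrArg Prod.fst h)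
  have hnef : ((a,d) : Fin n × Fin n) ≠ (b,c) :=
    fun h => finne vab (congrArg Prod.fst h)
  have hmem : ∀ p : Fin n × Fin n,
      p ∈ (M \ {(a,c),(b,d)}) ∪ {(a,d),(b,c)} ↔
      ((p ∈ M ∧ p ≠ (a,c) ∧ p ≠ (b,d)) ∨ p = (a,d) ∨ p = (b,c)) := by
    intro p
    simp [Finset.mem_union, Finset.mem_sdiff, Finset.mem_insert, Finset.mem_singleton]
    tauto
  -- new edges are not old edges / not in M
  have hf1M : ((a,d) : Fin n × Fin n) ∉ M := by
    intro h
    have hne : ((a,d) : Fin n × Fin n) ≠ (a,c) :=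
      fun h' => finne vcd (congrArg Prod.snd h').symm
    exact (hmatch.2 _ h _ h1 hne).1 rfl
  have hf2M : ((b,c) : Fin n × Fin n) ∉ M := by
    intro h
    have hne : ((b,c) : Fin n × Fin n) ≠ (b,d) :=
      fun h' => finne vcd (congrArg Prod.snd h')
    exact (hmatch.2 _ h _ h2 hne).1 rfl
  -- matching property
  have hpm : IsPairMatching ((M \ {(a,c),(b,d)}) ∪ {(a,d),(b,c)}) := by
    constructor
    · intro p hp
      rcases (hmem p).1 hp with ⟨hpM, _, _⟩ | rfl | rfl
      · exact hmatch.1 p hpM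
      · exact finne vad
      · exact finne vbc
    · intro p hp q hq hpq
      rcases (hmem p).1 hp with ⟨hpM, hpe1, hpe2⟩ | rfl | rfl <;>
        rcases (hmem q).1 hq with ⟨hqM, hqe1, hqe2⟩ | rfl | rfl
      · exact hmatch.2 p hpM q hqM hpq
      · obtain ⟨x1a, x1c, x2a, x2c⟩ := hmatch.2 p hpM (a,c) h1 hpe1
        obtain ⟨x1b, x1d, x2b, x2d⟩ := hmatch.2 p hpM (b,d) h2 hpe2
        exact ⟨x1a, x1d, x2a, x2d⟩
      · obtain ⟨x1a, x1c, x2a, x2c⟩ := hmatch.2 p hpM (a,c) h1 hpe1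
        obtain ⟨x1b, x1d, x2b, x2d⟩ := hmatch.2 p hpM (b,d) h2 hpe2
        exact ⟨x1b, x1c, x2b, x2c⟩
      · obtain ⟨x1a, x1c, x2a, x2c⟩ := hmatch.2 q hqM (a,c) h1 hqe1
        obtain ⟨x1b, x1d, x2b, x2d⟩ := hmatch.2 q hqM (b,d) h2 hqe2
        exact ⟨x1a.symm, x2a.symm, x1d.symm, x2d.symm⟩
      · exact absurd rfl hpq
      · exact ⟨finne vab, finne vac, finne (Ne.symm vbd), finne (Ne.symm vcd)⟩
      · obtain ⟨x1a, x1c, x2a, x2c⟩ := hmatch.2 q hqM (a,c) h1 hqe1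
        obtain ⟨x1b, x1d, x2b, x2d⟩ := hmatch.2 q hqM (b,d) h2 hqe2
        exact ⟨x1b.symm, x2b.symm, x1c.symm, x2c.symm⟩
      · exact ⟨finne (Ne.symm vab), finne vbd, finne (Ne.symm vac), finne vcd⟩
      · exact absurd rfl hpq
  -- cardinality
  have hsub : ({(a,c),(b,d)} : Finset (Fin n × Fin n)) ⊆ M := by
    intro p hp
    rcases Finset.mem_insert.1 hp with rfl | hp
    · exact h1
    · rw [Finset.mem_singleton.1 hp]; exact h2
  have hcard2 : ({(a,c),(b,d)} : Finset (Fin n × Fin n)).card = 2 := Finset.card_pair hne12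
  have hcardf2 : ({(a,d),(b,c)} : Finset (Fin n × Fin n)).card = 2 := Finset.card_pair hnef
  have hNcard : (M \ {(a,c),(b,d)}).card = M.card - 2 := by
    rw [Finset.card_sdiff_of_subset hsub, hcard2]
  have hMge : 2 ≤ M.card := by
    calc 2 = ({(a,c),(b,d)} : Finset (Fin n × Fin n)).card := hcard2.symm
    _ ≤ M.card := Finset.card_le_card hsub
  have he1N : ((a,c) : Fin n × Fin n) ∉ M \ {(a,c),(b,d)} := by simp
  have he2N : ((b,d) : Fin n × Fin n) ∉ M \ {(a,c),(b,d)} := by simp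
  have hf1N : ((a,d) : Fin n × Fin n) ∉ M \ {(a,c),(b,d)} := by
    intro h; exact hf1M (Finset.mem_sdiff.1 h).1
  have hf2N : ((b,c) : Fin n × Fin n) ∉ M \ {(a,c),(b,d)} := by
    intro h; exact hf2M (Finset.mem_sdiff.1 h).1
  have hdisjf : Disjoint (M \ {(a,c),(b,d)}) ({(a,d),(b,c)} : Finset (Fin n × Fin n)) := by
    simp [Finset.disjoint_insert_right, Finset.disjoint_singleton_right, hf1N, hf2N]
  have hcard : ((M \ {(a,c),(b,d)}) ∪ {(a,d),(b,c)}).card = M.card := by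
    rw [Finset.card_union_of_disjoint hdisjf, hNcard, hcardf2]
    omega
  refine ⟨hpm, hcard, ?_⟩
  -- conflict count
  have hMeq : M = (M \ {(a,c),(b,d)}) ∪ {(a,c),(b,d)} :=
    (Finset.sdiff_union_of_subset hsub).symm
  rw [count_union_pair _ _ _ hnef hf1N hf2N]
  conv_rhs => rw [hMeq, count_union_pair _ _ _ hne12 he1N he2N]
  -- compare termwise
  have hconf' : SegConflict (b,d) (a,c) :=
    (segConflict_comm vab vad (Ne.symm vbc) vcd).1 hconf
  obtain ⟨hnc1, hnc2⟩ := noconf hab hcd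
  have hSle : (∑ p ∈ M \ {(a,c),(b,d)},
        ((if SegConflict p (a,d) then 1 else 0) + (if SegConflict p (b,c) then 1 else 0)))
      ≤ ∑ p ∈ M \ {(a,c),(b,d)},
        ((if SegConflict p (a,c) then 1 else 0) + (if SegConflict p (b,d) then 1 else 0)) := by
    refine Finset.sum_le_sum fun p hp => ?_
    have hmem' := Finset.mem_sdiff.1 hp
    have hpM := hmem'.1
    have hpe1 : p ≠ (a,c) := fun h => hmem'.2 (by simp [h])
    have hpe2 : p ≠ (b,d) := fun h => hmem'.2 (by simp [h])
    obtain ⟨x1a, x1c, x2a, x2c⟩ := hmatch.2 p hpM (a,c) h1 hpe1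
    obtain ⟨x1b, x1d, x2b, x2d⟩ := hmatch.2 p hpM (b,d) h2 hpe2
    have := pointwise (x := p.1) (y := p.2) hab hcd
      (valne x1a) (valne x1b) (valne x1c) (valne x1d)
      (valne x2a) (valne x2b) (valne x2c) (valne x2d)
    simpa using this
  have hSle2 : (∑ q ∈ M \ {(a,c),(b,d)},
        ((if SegConflict (a,d) q then 1 else 0) + (if SegConflict (b,c) q then 1 else 0)))
      ≤ ∑ q ∈ M \ {(a,c),(b,d)},
        ((if SegConflict (a,c) q then 1 else 0) + (if SegConflict (b,d) q then 1 else 0)) := by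
    refine Finset.sum_le_sum fun p hp => ?_
    have hmem' := Finset.mem_sdiff.1 hp
    have hpM := hmem'.1
    have hpe1 : p ≠ (a,c) := fun h => hmem'.2 (by simp [h])
    have hpe2 : p ≠ (b,d) := fun h => hmem'.2 (by simp [h])
    obtain ⟨x1a, x1c, x2a, x2c⟩ := hmatch.2 p hpM (a,c) h1 hpe1
    obtain ⟨x1b, x1d, x2b, x2d⟩ := hmatch.2 p hpM (b,d) h2 hpe2
    have hP := pointwise (x := p.1) (y := p.2) hab hcd
      (valne x1a) (valne x1b) (valne x1c) (valne x1d)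
      (valne x2a) (valne x2b) (valne x2c) (valne x2d)
    have m1 : SegConflict (a,d) p ↔ SegConflict p (a,d) := by
      rw [show p = (p.1, p.2) from rfl]
      exact (segConflict_comm (valne x1a) (valne x1d) (valne x2a) (valne x2d)).symm
    have m2 : SegConflict (b,c) p ↔ SegConflict p (b,c) := by
      rw [show p = (p.1, p.2) from rfl]
      exact (segConflict_comm (valne x1b) (valne x1c) (valne x2b) (valne x2c)).symm
    have m3 : SegConflict (a,c) p ↔ SegConflict p (a,c) := by
      rw [show p = (p.1, p.2) from rfl]
      exact (segConflict_comm (valne x1a) (valne x1c) (valne x2a) (valne x2c)).symm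
    have m4 : SegConflict (b,d) p ↔ SegConflict p (b,d) := by
      rw [show p = (p.1, p.2) from rfl]
      exact (segConflict_comm (valne x1b) (valne x1d) (valne x2b) (valne x2d)).symm
    simp only [m1, m2, m3, m4]
    simpa using hP
  have hcorner : ((if SegConflict (a,d) (b,c) then 1 else 0) + (if SegConflict (b,c) (a,d) then 1 else 0) : ℕ)
      < (if SegConflict (a,c) (b,d) then 1 else 0) + (if SegConflict (b,d) (a,c) then 1 else 0) := by
    simp [hnc1, hnc2, hconf, hconf']
  omega

lemma exists_planar {n : ℕ} (L R : Finset (Fin n)) :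
    ∀ k (M : Finset (Fin n × Fin n)), conflictCount M ≤ k → M ⊆ L ×ˢ R →
    IsPairMatching M →
    ∃ M' : Finset (Fin n × Fin n), M' ⊆ L ×ˢ R ∧ IsPairMatching M' ∧
      M'.card = M.card ∧ ∀ p ∈ M', ∀ q ∈ M', p ≠ q → ¬ SegConflict p q := by
  intro k
  induction k with
  | zero =>
    intro M hcc hML hpm
    refine ⟨M, hML, hpm, rfl, fun p hp q hq hne hconf => ?_⟩
    have h0 : conflictCount M = 0 := Nat.le_zero.1 hcc
    rw [count_eq] at h0
    have h1 := (Finset.sum_eq_zero_iff.1 h0) p hp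
    have h2 := (Finset.sum_eq_zero_iff.1 h1) q hq
    simp [hne, hconf] at h2
  | succ k ih =>
    intro M hcc hML hpm
    by_cases hplanar : ∀ p ∈ M, ∀ q ∈ M, p ≠ q → ¬ SegConflict p q
    · exact ⟨M, hML, hpm, rfl, hplanar⟩
    · push_neg at hplanar
      obtain ⟨⟨a, c⟩, hp, ⟨b, d⟩, hq, hne, hconf⟩ := hplanar
      have hac : a ≠ c := hpm.1 _ hp
      have hbd : b ≠ d := hpm.1 _ hq
      obtain ⟨hab', had', hcb', hcd'⟩ := hpm.2 _ hp _ hq hne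
      -- all six distinctness as naturals
      have vac := valne hac
      have vbd := valne hbd
      have vab := valne hab'
      have vad := valne had'
      have vcb := valne hcb'
      have vcd := valne hcd'
      have haL : a ∈ L ∧ c ∈ R := by simpa [Finset.mem_product] using hML hp
      have hbL : b ∈ L ∧ d ∈ R := by simpa [Finset.mem_product] using hML hq
      rcases hconf with ⟨hB, hnD⟩ | ⟨hD, hnB⟩
      · -- clockwise order a b c d
        have hacd : ArcBtw a c d := (tri vac vcd vad).resolve_right hnD
        obtain ⟨hpm', hcard', hlt'⟩ :=
          core M hpm a b c d hp hq (Or.inl ⟨hB, hnD⟩) hB hacd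
        have hsub' : (M \ {(a,c),(b,d)}) ∪ {(a,d),(b,c)} ⊆ L ×ˢ R := by
          refine Finset.union_subset (Finset.Subset.trans (Finset.sdiff_subset) hML) ?_
          intro p hp'
          rcases Finset.mem_insert.1 hp' with rfl | hp'
          · simp [Finset.mem_product, haL.1, hbL.2]
          · rw [Finset.mem_singleton.1 hp']
            simp [Finset.mem_product, hbL.1, haL.2]
        obtain ⟨M'', hM''sub, hM''pm, hM''card, hM''pl⟩ :=
          ih _ (by omega) hsub' hpm'
        exact ⟨M'', hM''sub, hM''pm, by rw [hM''card, hcard'], hM''pl⟩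
      · -- clockwise order a d c b ; renormalize with quadruple (b, a, d, c)
        have vbc : (b:ℕ) ≠ c := Ne.symm vcb
        have hacb : ArcBtw a c b := (tri vab vbc vac).resolve_left hnB
        obtain ⟨nbad, nbdc, nnbcd⟩ := norm2 hD hacb vbd
        have sconf2 : SegConflict (b,d) (a,c) := Or.inl ⟨nbad, nnbcd⟩
        obtain ⟨hpm', hcard', hlt'⟩ :=
          core M hpm b a d c hq hp sconf2 nbad nbdc
        have hsub' : (M \ {(b,d),(a,c)}) ∪ {(b,c),(a,d)} ⊆ L ×ˢ R := by
          refine Finset.union_subset (Finset.Subset.trans (Finset.sdiff_subset) hML) ?_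
          intro p hp'
          rcases Finset.mem_insert.1 hp' with rfl | hp'
          · simp [Finset.mem_product, hbL.1, haL.2]
          · rw [Finset.mem_singleton.1 hp']
            simp [Finset.mem_product, haL.1, hbL.2]
        obtain ⟨M'', hM''sub, hM''pm, hM''card, hM''pl⟩ :=
          ih _ (by omega) hsub' hpm'
        exact ⟨M'', hM''sub, hM''pm, by rw [hM''card, hcard'], hM''pl⟩

/-- Conflict resolution for non-crossing matchings.  The vertices of
the bipartite alignment graph `B(f)` lie on the boundary cycle of a face, with
left-open vertices `L` and right-open vertices `R`; every pair in `L × R` is an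
edge of `B(f)`, so matchings live in `L ×ˢ R`.  If `(a, c), (b, d) ∈ M` are in
conflict with `a, b, c, d` in clockwise order, then the uncrossed set
`M' = (M \ {(a,c),(b,d)}) ∪ {(a,d),(b,c)}` is again a matching of the same
cardinality (hence still maximum) with strictly fewer conflicting pairs;
consequently there exists a planar (conflict-free) matching of the same
cardinality on the same vertex classes. -/
theorem uncrossing_matching {n : ℕ} (L R : Finset (Fin n)) (hLR : Disjoint L R)
    (M : Finset (Fin n × Fin n)) (hM : M ⊆ L ×ˢ R) (hmatch : IsPairMatching M) :
    (∀ a b c d : Fin n,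
      (a, c) ∈ M → (b, d) ∈ M → SegConflict (a, c) (b, d) →
      ArcBtw a b c → ArcBtw a c d →
      (IsPairMatching ((M \ {(a, c), (b, d)}) ∪ {(a, d), (b, c)}) ∧
        ((M \ {(a, c), (b, d)}) ∪ {(a, d), (b, c)}).card = M.card ∧
        conflictCount ((M \ {(a, c), (b, d)}) ∪ {(a, d), (b, c)}) < conflictCount M)) ∧
    (∃ M' : Finset (Fin n × Fin n), M' ⊆ L ×ˢ R ∧ IsPairMatching M' ∧
      M'.card = M.card ∧ ∀ p ∈ M', ∀ q ∈ M', p ≠ q → ¬ SegConflict p q) := by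
  refine ⟨fun a b c d h1 h2 hconf hab hcd => core M hmatch a b c d h1 h2 hconf hab hcd, ?_⟩
  exact exists_planar L R (conflictCount M) M le_rfl hM hmatch
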